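/- (Sufficient decrease) Let g : ℝⁿ → ℝ be convex, let h : ℝⁿ → ℝ be convex and differentiable with gradient ∇h, let x ∈ ℝⁿ, γ > 0, and suppose y ∈ ℝⁿ is a global minimizer of the proximal linearized subproblem α ↦ g(α) − ⟨∇h(x), α − x⟩ + (1/(2γ))·‖α − x‖². Then, with f = g − h, one has f(x) ≥ f(y) + (1/(2γ))·‖y − x‖². -/

import Mathlib

open scoped RealInnerProductSpace

lemma grad_ineq_aux (n : ℕ) (h : EuclideanSpace ℝ (Fin n) → ℝ)
    (hh : ConvexOn ℝ Set.univ h) (x y gx : EuclideanSpace ℝ (Fin n))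
    (hgrad : HasGradientAt h gx x) :
    ⟪gx, y - x⟫ ≤ h y - h x := by
  set φ : ℝ → ℝ := fun t => h (x + t • (y - x)) with hφ
  have hconv : ConvexOn ℝ Set.univ φ := by
    have := hh.comp_affineMap (AffineMap.lineMap x y : ℝ →ᵃ[ℝ] EuclideanSpace ℝ (Fin n))
    simp only [Set.preimage_univ] at this
    have e : φ = h ∘ ⇑(AffineMap.lineMap x y : ℝ →ᵃ[ℝ] EuclideanSpace ℝ (Fin n)) := by
      funext t
      simp [φ, AffineMap.lineMap_apply, add_comm]
    rw [e]; exact this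
  have hline : HasDerivAt (fun t : ℝ => x + t • (y - x)) (y - x) 0 := by
    simpa using ((hasDerivAt_id (0:ℝ)).smul_const (y - x)).const_add x
  have hd : HasDerivAt φ ⟪gx, y - x⟫ 0 := by
    have hf : HasFDerivAt h (InnerProductSpace.toDual ℝ _ gx : _ →L[ℝ] ℝ) x := hgrad
    have hf2 : HasFDerivAt h (InnerProductSpace.toDual ℝ _ gx : _ →L[ℝ] ℝ)
        (x + (0:ℝ) • (y - x)) := by simpa using hf
    have := hf2.comp_hasDerivAt (f := fun t : ℝ => x + t • (y - x)) 0 hline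
    exact this
  have := hconv.le_slope_of_hasDerivAt (Set.mem_univ 0) (Set.mem_univ 1) one_pos hd
  simpa [slope_def_field, φ] using this

/-- **Sufficient decrease.** Let `g : ℝⁿ → ℝ` be convex, `h : ℝⁿ → ℝ` convex and
differentiable with gradient `∇h`, `x ∈ ℝⁿ`, `γ > 0`, and suppose `y` is a global minimizer
of the proximal linearized subproblem `α ↦ g(α) − ⟪∇h(x), α − x⟫ + (1/(2γ))·‖α − x‖²`.
Then, with `f = g − h`, one has `f(x) ≥ f(y) + (1/(2γ))·‖y − x‖²`. -/
theorem prox_sufficient_decrease (n : ℕ) (g h : EuclideanSpace ℝ (Fin n) → ℝ)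
    (hg : ConvexOn ℝ Set.univ g) (hh : ConvexOn ℝ Set.univ h)
    (gradh : EuclideanSpace ℝ (Fin n) → EuclideanSpace ℝ (Fin n))
    (hgrad : ∀ u : EuclideanSpace ℝ (Fin n), HasGradientAt h (gradh u) u)
    (x y : EuclideanSpace ℝ (Fin n)) (γ : ℝ) (hγ : 0 < γ)
    (hy : ∀ α : EuclideanSpace ℝ (Fin n),
        g y - ⟪gradh x, y - x⟫ + (1 / (2 * γ)) * ‖y - x‖ ^ 2
          ≤ g α - ⟪gradh x, α - x⟫ + (1 / (2 * γ)) * ‖α - x‖ ^ 2) :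
    g x - h x ≥ (g y - h y) + (1 / (2 * γ)) * ‖y - x‖ ^ 2 := by
  have h1 := hy x
  simp only [sub_self, inner_zero_right, norm_zero] at h1
  have h2 := grad_ineq_aux n h hh x y (gradh x) (hgrad x)
  have h1' : g y - ⟪gradh x, y - x⟫ + (1 / (2 * γ)) * ‖y - x‖ ^ 2 ≤ g x := by
    simpa using h1
  linarith
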